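/- Let k ≥ 50 and let γ be the dominant root of x^k - 2x^{k-1} - ... - x - 1, g_k(z) = (z-1)/((k+1)z² - 3kz + k - 1), and φ = (1+√5)/2. If n is an integer with 1 < n < φ^{k/2}, then (2γ - 2)g_k(γ)γ^n = (2φ^{2n+1}/(φ+2))(1 + ξ) for some real ξ with |ξ| < 1.25/φ^{k/2}. -/

import Mathlib

noncomputable def φ : ℝ := (1 + Real.sqrt 5) / 2

def IsDomRoot (k : ℕ) (γ : ℝ) : Prop :=
  1 < γ ∧ γ ^ k = 2 * γ ^ (k - 1) + ∑ i ∈ Finset.range (k - 1), γ ^ i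

noncomputable def g (k : ℕ) (z : ℝ) : ℝ :=
  (z - 1) / (((k : ℝ) + 1) * z ^ 2 - 3 * (k : ℝ) * z + ((k : ℝ) - 1))

set_option maxHeartbeats 1000000

lemma phi_gt : 1.618 < φ := by
  have h := Real.sq_sqrt (by norm_num : (0:ℝ) ≤ 5)
  have h2 := Real.sqrt_nonneg 5
  unfold φ; nlinarith

lemma phi_lt : φ < 1.61806 := by
  have h := Real.sq_sqrt (by norm_num : (0:ℝ) ≤ 5)
  have h2 := Real.sqrt_nonneg 5
  unfold φ; nlinarith

lemma phi_sq : φ ^ 2 = φ + 1 := by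
  have h := Real.sq_sqrt (by norm_num : (0:ℝ) ≤ 5)
  unfold φ; nlinarith

lemma key_eq (k : ℕ) (hk : 50 ≤ k) (γ : ℝ) (hγ : IsDomRoot k γ) :
    γ ^ (k - 1) * (γ ^ 2 - 3 * γ + 1) = -1 := by
  obtain ⟨h1, h2⟩ := hγ
  have hne : γ ≠ 1 := ne_of_gt h1
  rw [geom_sum_eq hne] at h2
  obtain ⟨m, rfl⟩ : ∃ m, k = m + 1 := ⟨k - 1, by omega⟩
  simp only [Nat.add_sub_cancel] at h2 ⊢
  have hg1 : γ - 1 ≠ 0 := sub_ne_zero.mpr hne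
  field_simp at h2
  linear_combination h2

lemma final_eq (x y D : ℝ) (n : ℕ) (hD : D ≠ 0) (hy : y ≠ 0) (hy2 : y + 2 ≠ 0) :
    (2*x-2) * ((x-1)/D) * x^n
      = 2*y^(2*n+1)/(y+2) * (1+((x-1)^2*(y+2)/(y*D) * (x/y^2)^n - 1)) := by
  simp only [div_pow, ← pow_mul]
  field_simp
  ring

theorem dominant_term_approx (k : ℕ) (hk : 50 ≤ k) (γ : ℝ) (hγ : IsDomRoot k γ)
    (n : ℕ) (hn : 1 < n) (hnk : (n : ℝ) < φ ^ ((k : ℝ) / 2)) :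
    ∃ ξ : ℝ, |ξ| < 1.25 / φ ^ ((k : ℝ) / 2) ∧
      (2 * γ - 2) * g k γ * γ ^ n = 2 * φ ^ (2 * n + 1) / (φ + 2) * (1 + ξ) := by
  have hγ1 : 1 < γ := hγ.1
  have hkey := key_eq k hk γ hγ
  set m := k - 1 with hm
  have hkm : k = m + 1 := by omega
  have hm49 : 49 ≤ m := by omega
  clear hm
  have hφ1 : 1.618 < φ := phi_gt
  have hφ2 : φ < 1.61806 := phi_lt
  have hφsq : φ ^ 2 = φ + 1 := phi_sq
  have hφpos : (0:ℝ) < φ := by linarith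
  have hγpos : (0:ℝ) < γ := by linarith
  have hγmpos : (0:ℝ) < γ ^ m := pow_pos hγpos m
  -- upper bound: γ < φ^2
  have hγφ : γ < φ ^ 2 := by
    by_contra h
    push_neg at h
    have h2 : 0 ≤ γ ^ 2 - 3 * γ + 1 := by nlinarith
    nlinarith [mul_nonneg hγmpos.le h2]
  -- lower bound: 2.6 < γ
  have hγ26 : 2.6 < γ := by
    by_contra h
    push_neg at h
    rcases le_or_gt γ 2 with h2 | h2
    · have hc : γ ^ 2 - 3 * γ + 1 ≤ -1 := by nlinarith
      have hgm : 1 < γ ^ m := one_lt_pow₀ hγ1 (by omega)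
      nlinarith
    · have hc : γ ^ 2 - 3 * γ + 1 ≤ -0.04 := by nlinarith
      have hgm : (2:ℝ) ^ 49 ≤ γ ^ m := by
        calc (2:ℝ) ^ 49 ≤ 2 ^ m := pow_le_pow_right₀ (by norm_num) hm49
        _ ≤ γ ^ m := pow_le_pow_left₀ (by norm_num) h2.le m
      have h5 : γ ^ m * (γ ^ 2 - 3 * γ + 1) ≤ γ ^ m * (-0.04) :=
        mul_le_mul_of_nonneg_left hc hγmpos.le
      have h6 : γ ^ m * (-0.04) ≤ (2:ℝ) ^ 49 * (-0.04) := by nlinarith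
      rw [hkey] at h5
      norm_num at h5 h6
      linarith
  -- ε and δ
  set ε : ℝ := (γ ^ m)⁻¹ with hε
  have hεpos : 0 < ε := inv_pos.mpr hγmpos
  have heps : γ ^ 2 - 3 * γ + 1 = -ε := by
    rw [hε]
    field_simp
    linear_combination hkey
  set δ : ℝ := φ ^ 2 - γ with hδ
  have hδpos : 0 < δ := by rw [hδ]; linarith
  have hδε : δ * (γ + φ ^ 2 - 3) = ε := by
    rw [hδ]
    linear_combination (φ ^ 2 + φ - 1) * hφsq - heps
  have hδle : 2.2 * δ ≤ ε := by nlinarith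
  clear_value δ
  have hγm26 : (2.6:ℝ) ^ m ≤ γ ^ m := pow_le_pow_left₀ (by norm_num) hγ26.le m
  have hεle : ε ≤ (5/13 : ℝ) ^ m := by
    rw [hε]
    rw [inv_le_comm₀ hγmpos (by positivity)]
    calc ((5/13:ℝ) ^ m)⁻¹ = (13/5:ℝ) ^ m := by rw [← inv_pow]; norm_num
    _ ≤ γ ^ m := le_trans (by norm_num [pow_le_pow_left₀]) hγm26
  have hk2 : (k:ℝ) ≤ 2 ^ k := by exact_mod_cast (Nat.lt_two_pow_self (n := k)).le
  have hkε : (k:ℝ) * ε ≤ 2 * (10/13 : ℝ) ^ m := by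
    calc (k:ℝ) * ε ≤ 2 ^ k * (5/13:ℝ) ^ m := by
          apply mul_le_mul hk2 hεle hεpos.le (by positivity)
    _ = 2 * (10/13:ℝ) ^ m := by
          rw [hkm, pow_succ]
          rw [show ((10:ℝ)/13) ^ m = 2 ^ m * (5/13) ^ m by rw [← mul_pow]; norm_num]
          ring
  have hkε1 : (k:ℝ) * ε ≤ 0.0001 := by
    have h1 : ((10:ℝ)/13) ^ m ≤ ((10:ℝ)/13) ^ 49 :=
      pow_le_pow_of_le_one (by norm_num) (by norm_num) hm49
    have h49 : ((10:ℝ)/13) ^ 49 ≤ 0.00005 := by norm_num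
    linarith
  have hε1 : ε ≤ 0.000002 := by
    have hk50 : (50:ℝ) ≤ k := by exact_mod_cast hk
    nlinarith [mul_nonneg (sub_nonneg.mpr hk50) hεpos.le]
  clear_value ε
  clear hε hkey hγmpos hγm26 hδε hk2
  have hknn : (0:ℝ) ≤ (k:ℝ) * ε := by positivity
  -- D
  set D : ℝ := ((k : ℝ) + 1) * γ ^ 2 - 3 * (k : ℝ) * γ + ((k : ℝ) - 1) with hD
  have hgD : g k γ = (γ - 1) / D := rfl
  have hDeq : D = γ ^ 2 - 1 - (k:ℝ) * ε := by rw [hD]; linear_combination (k:ℝ) * heps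
  clear_value D
  have hD1 : 5.7 < D := by rw [hDeq]; nlinarith
  have hD2 : D < 5.86 := by rw [hDeq]; nlinarith
  have hDpos : 0 < D := by linarith
  -- A
  set A : ℝ := (γ - 1) ^ 2 * (φ + 2) / (φ * D) with hA
  have hφDpos : 0 < φ * D := by positivity
  have hden : 9.2 < φ * D := by nlinarith
  have hAeq : A - 1 = (φ * (k:ℝ) * ε - 2 * (γ - 1) * δ) / (φ * D) := by
    rw [hA, div_sub_one (ne_of_gt hφDpos)]
    congr 1
    rw [hδ]
    linear_combination (-φ) * hDeq + (2 * γ - 2) * hφsq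
  clear_value A
  have hγ1φ : γ - 1 < 1.62 := by linarith
  have h2d : 2 * (γ - 1) * δ ≤ 1.5 * ε := by
    have t1 : (γ - 1) * δ ≤ 1.62 * δ := mul_le_mul_of_nonneg_right hγ1φ.le hδpos.le
    linarith
  have hk50 : (50:ℝ) ≤ (k:ℝ) := by exact_mod_cast hk
  have t5 : 50 * ε ≤ (k:ℝ) * ε := mul_le_mul_of_nonneg_right hk50 hεpos.le
  have hnum : |φ * (k:ℝ) * ε - 2 * (γ - 1) * δ| ≤ 2.3 * ((k:ℝ) * ε) := by
    rw [abs_le]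
    have t2 : φ * ((k:ℝ) * ε) ≤ 1.62 * ((k:ℝ) * ε) :=
      mul_le_mul_of_nonneg_right (by linarith) hknn
    have t3 : 0 ≤ (γ - 1) * δ := mul_nonneg (by linarith) hδpos.le
    have t4 : 0 ≤ φ * ((k:ℝ) * ε) := mul_nonneg hφpos.le hknn
    constructor
    · linarith
    · linarith
  have hAb : |A - 1| ≤ (k:ℝ) * ε / 4 := by
    rw [hAeq, abs_div, abs_of_pos hφDpos, div_le_iff₀ hφDpos]
    nlinarith [abs_nonneg (φ * (k:ℝ) * ε - 2 * (γ - 1) * δ)]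
  clear hnum t5 hk50 h2d hγ1φ hden hD1 hD2 hDeq heps hγ26 hγ1 hkε1 hε1 hAeq hφDpos hk hn
  -- B
  set B : ℝ := (γ / φ ^ 2) ^ n with hB
  have hφ2pos : (0:ℝ) < φ ^ 2 := by positivity
  have hB0 : 0 < B := pow_pos (by positivity) n
  have hB1 : B ≤ 1 := pow_le_one₀ (by positivity) (by rw [div_le_one hφ2pos]; linarith)
  have hratio : 1 - γ / φ ^ 2 ≤ ε / 5 := by
    have h0 : 1 - γ / φ ^ 2 = δ / φ ^ 2 := by
      rw [hδ]; field_simp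
    rw [h0, div_le_div_iff₀ hφ2pos (by norm_num : (0:ℝ) < 5)]
    nlinarith [mul_le_mul_of_nonneg_right hδle hφ2pos.le, hδpos, hφ1, hφsq]
  have hBb : 1 - B ≤ (n:ℝ) * ε / 5 := by
    have hber := one_add_mul_le_pow (a := γ / φ ^ 2 - 1)
      (by linarith [div_pos hγpos hφ2pos]) n
    have h1 : (1 : ℝ) + (n:ℝ) * (γ / φ ^ 2 - 1) ≤ B := by
      rw [hB]; exact hber.trans_eq (by ring)
    have h2 : (n:ℝ) * (1 - γ / φ ^ 2) ≤ (n:ℝ) * (ε / 5) :=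
      mul_le_mul_of_nonneg_left hratio (Nat.cast_nonneg n)
    linarith
  clear_value B
  -- P
  set P : ℝ := φ ^ ((k : ℝ) / 2) with hP
  have hP0 : 0 < P := Real.rpow_pos_of_pos hφpos _
  have hPsq : P ^ 2 = φ ^ k := by
    rw [hP, ← Real.rpow_natCast (φ ^ ((k:ℝ) / 2)) 2, ← Real.rpow_mul hφpos.le]
    have h2 : ((k:ℝ) / 2 * ((2:ℕ):ℝ)) = ((k:ℕ):ℝ) := by push_cast; ring
    rw [h2, Real.rpow_natCast]
  have hPle : P ≤ (1.28 : ℝ) ^ k := by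
    have hb : (0:ℝ) < (1.28:ℝ) ^ k := by positivity
    have h1 : P ^ 2 ≤ ((1.28:ℝ) ^ k) ^ 2 := by
      rw [hPsq, ← pow_mul, mul_comm k 2, pow_mul]
      exact pow_le_pow_left₀ hφpos.le (by norm_num; linarith) k
    by_contra hcon
    push_neg at hcon
    exact absurd h1 (not_le.mpr (pow_lt_pow_left₀ hcon hb.le two_ne_zero))
  clear_value P
  -- the two smallness bounds
  have h3 : (k:ℝ) * ε * P ≤ 2.56 := by
    have h := mul_le_mul hkε hPle hP0.le (by positivity)
    have he : 2 * ((10:ℝ)/13) ^ m * (1.28:ℝ) ^ k = 2.56 * ((64:ℝ)/65) ^ m := by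
      rw [hkm, pow_succ, show ((64:ℝ)/65) = (10/13) * 1.28 by norm_num, mul_pow]
      ring
    have hle1 : ((64:ℝ)/65) ^ m ≤ 1 := pow_le_one₀ (by norm_num) (by norm_num)
    linarith
  have h4 : (n:ℝ) * ε * P ≤ 0.0005 := by
    have hnn : (0:ℝ) ≤ (n:ℝ) := Nat.cast_nonneg n
    have h1 : (n:ℝ) * ε * P ≤ P * ε * P :=
      mul_le_mul_of_nonneg_right (mul_le_mul_of_nonneg_right hnk.le hεpos.le) hP0.le
    have h2 : P * ε * P = φ ^ k * ε := by rw [← hPsq]; ring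
    have hφk : φ ^ k ≤ (1.61806:ℝ) ^ k := pow_le_pow_left₀ hφpos.le hφ2.le k
    have h5 : φ ^ k * ε ≤ (1.61806:ℝ) ^ (m+1) * ((5:ℝ)/13) ^ m := by
      rw [← hkm]
      exact mul_le_mul hφk hεle hεpos.le (by positivity)
    have h6 : (1.61806:ℝ) ^ (m+1) * ((5:ℝ)/13) ^ m ≤ 1.61806 * ((63:ℝ)/100) ^ m := by
      have t : ((1.61806:ℝ) * (5/13)) ^ m ≤ ((63:ℝ)/100) ^ m :=
        pow_le_pow_left₀ (by norm_num) (by norm_num) m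
      calc (1.61806:ℝ) ^ (m+1) * ((5:ℝ)/13) ^ m
          = 1.61806 * ((1.61806:ℝ) * (5/13)) ^ m := by rw [mul_pow, pow_succ]; ring
      _ ≤ 1.61806 * ((63:ℝ)/100) ^ m := by linarith
    have h7 : ((63:ℝ)/100) ^ m ≤ ((63:ℝ)/100) ^ 49 :=
      pow_le_pow_of_le_one (by norm_num) (by norm_num) hm49
    have h8 : ((63:ℝ)/100) ^ 49 < 0.0001 := by norm_num
    linarith
  -- conclude
  refine ⟨A * B - 1, ?_, ?_⟩
  · clear hgD hD hA hB hP hPsq hPle hεle hkε hδ hφsq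
    clear hδle hδpos hratio hγφ hφ1 hφ2 hnk
    clear hkm hm49 hφpos hγpos hDpos hφ2pos
    have habs : |A * B - 1| ≤ |A - 1| * B + (1 - B) := by
      have hring : A * B - 1 = (A - 1) * B + (B - 1) := by ring
      rw [hring]
      calc |(A - 1) * B + (B - 1)| ≤ |(A - 1) * B| + |B - 1| := abs_add_le _ _
      _ = |A - 1| * B + (1 - B) := by
          have e1 : |B - 1| = 1 - B := by
            rw [abs_of_nonpos (by linarith : B - 1 ≤ 0)]; ring
          rw [abs_mul, abs_of_pos hB0, e1]
    rw [lt_div_iff₀ hP0]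
    have hchain : |A * B - 1| ≤ (k:ℝ) * ε / 4 + (n:ℝ) * ε / 5 := by
      have t6 : |A - 1| * B ≤ |A - 1| * 1 := mul_le_mul_of_nonneg_left hB1 (abs_nonneg _)
      linarith
    have t7 := mul_le_mul_of_nonneg_right hchain hP0.le
    linarith [t7, h3, h4]
  · clear hAb hBb hεle hkε hPsq hPle hnk h3 h4 hδle hδpos hratio
    clear hδ hB0 hB1 hP0 hP hγφ hknn
    rw [hgD, hA, hB]
    exact final_eq γ φ D n (ne_of_gt hDpos) (ne_of_gt hφpos) (by linarith)
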